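/- Let X_0 ∈ ℂ^{N×N} be Hermitian, t ∈ ℝ, λ ∈ ℝ, and let P be the orthogonal projection onto ker(X_0 − λ I). Let Q ∈ ℂ^{N×N} be unitary and R ∈ ℂ^{N×N} upper triangular with positive real diagonal entries such that exp(t X_0) = Q R. Let E = I_{N×k} ∈ ℂ^{N×k} (the first k columns of the identity) and set L := (E^* R^{−*} E)^{−1} ∈ ℂ^{k×k}. Then L is lower triangular with positive diagonal entries, L L^* = E^* exp(2t X_0) E, and E^* Q^* P Q E = e^{2λt} · L^{−1} (E^* P E) L^{−*}. (Consequently, under the Toda flow the spectral weight of X(t) = Q^* X_0 Q at the eigenvalue λ equals L^{−1} (e^{2λt} W(0)) L^{−*}, where W(0) = E^* P E is the initial weight.) -/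

import Mathlib

open Matrix

noncomputable section

/-- The first `k` columns of the `N×N` identity, `E = I_{N×k}`. -/
def Ecols (N k : ℕ) : Matrix (Fin N) (Fin k) ℂ :=
  Matrix.of fun i a => if (i : ℕ) = (a : ℕ) then 1 else 0

namespace TodaAux

variable {N k : ℕ}

lemma Ecols_apply (hk : k ≤ N) (i : Fin N) (a : Fin k) :
    Ecols N k i a = if i = a.castLE hk then 1 else 0 := by
  simp only [Ecols, of_apply]
  congr 1
  simp [Fin.ext_iff]

lemma entry (hk : k ≤ N) (M : Matrix (Fin N) (Fin N) ℂ) (a b : Fin k) :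
    ((Ecols N k)ᴴ * M * Ecols N k) a b = M (a.castLE hk) (b.castLE hk) := by
  simp only [Matrix.mul_apply, conjTranspose_apply, Ecols_apply hk]
  simp [Finset.sum_ite_eq', apply_ite, mul_ite, ite_mul]

lemma sum_split (hk : k ≤ N) (f : Fin N → ℂ) (hf : ∀ j : Fin N, k ≤ (j : ℕ) → f j = 0) :
    ∑ j : Fin N, f j = ∑ c : Fin k, f (c.castLE hk) := by
  have h1 : ∑ c : Fin k, f (c.castLE hk)
      = ∑ j ∈ Finset.univ.map (Fin.castLEEmb hk), f j := by
    rw [Finset.sum_map]; rfl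
  rw [h1]
  refine (Finset.sum_subset (Finset.subset_univ _) ?_).symm
  intro j _ hj
  refine hf j ?_
  by_contra h
  push_neg at h
  exact hj (Finset.mem_map.mpr ⟨⟨(j : ℕ), h⟩, Finset.mem_univ _, by
    simp [Fin.castLEEmb, Fin.ext_iff]⟩)

lemma split_mul (hk : k ≤ N) {A B : Matrix (Fin N) (Fin N) ℂ}
    (h : ∀ j : Fin N, k ≤ (j : ℕ) →
        (∀ i : Fin N, (i : ℕ) < k → A i j = 0) ∨ (∀ b : Fin N, (b : ℕ) < k → B j b = 0)) :
    (Ecols N k)ᴴ * (A * B) * Ecols N k =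
      ((Ecols N k)ᴴ * A * Ecols N k) * ((Ecols N k)ᴴ * B * Ecols N k) := by
  ext a b
  rw [entry hk, Matrix.mul_apply, Matrix.mul_apply]
  simp only [entry hk]
  refine sum_split hk _ ?_
  intro j hj
  rcases h j hj with h' | h'
  · rw [h' _ (by simp [a.isLt]), zero_mul]
  · rw [h' _ (by simp [b.isLt]), mul_zero]

lemma EHE (hk : k ≤ N) : (Ecols N k)ᴴ * Ecols N k = (1 : Matrix (Fin k) (Fin k) ℂ) := by
  have h : (Ecols N k)ᴴ * Ecols N k
      = (Ecols N k)ᴴ * (1 : Matrix (Fin N) (Fin N) ℂ) * Ecols N k := by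
    rw [Matrix.mul_one]
  ext a b
  rw [h, entry hk]
  simp [Matrix.one_apply, Fin.ext_iff]

lemma exp_mul_proj {n : ℕ} (A P : Matrix (Fin n) (Fin n) ℂ) (c : ℂ) (hAP : A * P = c • P) :
    NormedSpace.exp A * P = Complex.exp c • P := by
  letI : SeminormedRing (Matrix (Fin n) (Fin n) ℂ) := Matrix.linftyOpSemiNormedRing
  letI : NormedRing (Matrix (Fin n) (Fin n) ℂ) := Matrix.linftyOpNormedRing
  letI : NormedAlgebra ℂ (Matrix (Fin n) (Fin n) ℂ) := Matrix.linftyOpNormedAlgebra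
  have hpow : ∀ m : ℕ, A ^ m * P = c ^ m • P := by
    intro m
    induction m with
    | zero => simp
    | succ m ih =>
      rw [pow_succ, Matrix.mul_assoc, hAP, mul_smul_comm, ih, smul_smul, ← pow_succ']
  have hsum : Summable fun m : ℕ => ((Nat.factorial m : ℂ)⁻¹ * c ^ m) := by
    have := NormedSpace.expSeries_summable' (𝕂 := ℂ) c
    simpa [smul_eq_mul] using this
  have hterm : ∀ m : ℕ, ((Nat.factorial m : ℂ)⁻¹ • A ^ m) * P
      = ((Nat.factorial m : ℂ)⁻¹ * c ^ m) • P := by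
    intro m
    rw [smul_mul_assoc, hpow, smul_smul]
  calc NormedSpace.exp A * P
      = (∑' m : ℕ, (Nat.factorial m : ℂ)⁻¹ • A ^ m) * P := by
        simp only [NormedSpace.exp_eq_tsum ℂ]
    _ = ∑' m : ℕ, ((Nat.factorial m : ℂ)⁻¹ • A ^ m) * P :=
        (Summable.tsum_mul_right P (NormedSpace.expSeries_summable' (𝕂 := ℂ) A)).symm
    _ = ∑' m : ℕ, ((Nat.factorial m : ℂ)⁻¹ * c ^ m) • P := tsum_congr hterm
    _ = (∑' m : ℕ, ((Nat.factorial m : ℂ)⁻¹ * c ^ m)) • P := Summable.tsum_smul_const hsum P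
    _ = Complex.exp c • P := by
        congr 1
        rw [Complex.exp_eq_exp_ℂ]
        simp only [NormedSpace.exp_eq_tsum ℂ, smul_eq_mul]

end TodaAux

theorem toda_spectral_weight_evolution
    (N k : ℕ) (hk : k ≤ N)
    (X0 : Matrix (Fin N) (Fin N) ℂ) (hX0 : X0.IsHermitian)
    (t lam : ℝ)
    (P : Matrix (Fin N) (Fin N) ℂ) (hP : P.IsHermitian) (hPidem : P * P = P)
    (hPrange : ∀ v : Fin N → ℂ, X0.mulVec v = (lam : ℂ) • v ↔ P.mulVec v = v)
    (Q R : Matrix (Fin N) (Fin N) ℂ)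
    (hQ : Q ∈ Matrix.unitaryGroup (Fin N) ℂ)
    (hRtri : ∀ i j : Fin N,
        ((j : ℕ) < (i : ℕ) → R i j = 0) ∧
        (i = j → 0 < (R i j).re ∧ (R i j).im = 0))
    (hQR : NormedSpace.exp ((t : ℂ) • X0) = Q * R)
    (L : Matrix (Fin k) (Fin k) ℂ)
    (hL : L = ((Ecols N k)ᴴ * (R⁻¹)ᴴ * Ecols N k)⁻¹) :
    (∀ a b : Fin k,
        ((a : ℕ) < (b : ℕ) → L a b = 0) ∧
        (a = b → 0 < (L a b).re ∧ (L a b).im = 0)) ∧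
    L * Lᴴ = (Ecols N k)ᴴ * NormedSpace.exp (((2 * t : ℝ) : ℂ) • X0) * Ecols N k ∧
    (Ecols N k)ᴴ * Qᴴ * P * Q * Ecols N k =
      (Real.exp (2 * lam * t) : ℂ) • (L⁻¹ * ((Ecols N k)ᴴ * P * Ecols N k) * (L⁻¹)ᴴ) := by
  -- notation
  set M : Matrix (Fin N) (Fin N) ℂ := NormedSpace.exp ((t : ℂ) • X0) with hMdef
  -- unitarity
  have hQHQ : Qᴴ * Q = 1 := by
    have := Matrix.mem_unitaryGroup_iff'.mp hQ
    simpa [Matrix.star_eq_conjTranspose] using this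
  have hQQH : Q * Qᴴ = 1 := by
    have := Matrix.mem_unitaryGroup_iff.mp hQ
    simpa [Matrix.star_eq_conjTranspose] using this
  -- triangularity and invertibility of R
  have hRup : ∀ i j : Fin N, (j : ℕ) < (i : ℕ) → R i j = 0 := fun i j h => (hRtri i j).1 h
  have hRu : R.BlockTriangular id := by
    intro i j hij
    exact hRup i j hij
  have hRii : ∀ i, R i i ≠ 0 := by
    intro i h
    have h1 := ((hRtri i i).2 rfl).1
    rw [h] at h1
    simp at h1
  have hRdet : IsUnit R.det := by
    rw [Matrix.det_of_upperTriangular hRu]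
    exact (Finset.prod_ne_zero_iff.mpr fun i _ => hRii i).isUnit
  haveI := R.invertibleOfIsUnitDet hRdet
  have hRRinv : R * R⁻¹ = 1 := Matrix.mul_nonsing_inv R hRdet
  have hRinvUp : ∀ i j : Fin N, (j : ℕ) < (i : ℕ) → R⁻¹ i j = 0 := by
    intro i j h
    exact Matrix.blockTriangular_inv_of_blockTriangular hRu h
  have hRinvH_low : ∀ i j : Fin N, (i : ℕ) < (j : ℕ) → (R⁻¹)ᴴ i j = 0 := by
    intro i j h
    simp [Matrix.conjTranspose_apply, hRinvUp j i h]
  have hRH_low : ∀ i j : Fin N, (i : ℕ) < (j : ℕ) → Rᴴ i j = 0 := by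
    intro i j h
    simp [Matrix.conjTranspose_apply, hRup j i h]
  -- splitting lemmas
  have splitL : ∀ {A A' : Matrix (Fin N) (Fin N) ℂ},
      (∀ i j : Fin N, (i : ℕ) < (j : ℕ) → A i j = 0) →
      (Ecols N k)ᴴ * (A * A') * Ecols N k =
        ((Ecols N k)ᴴ * A * Ecols N k) * ((Ecols N k)ᴴ * A' * Ecols N k) := by
    intro A A' hA
    exact TodaAux.split_mul hk (fun j hj => Or.inl fun i hi => hA i j (lt_of_lt_of_le hi hj))
  have splitR : ∀ {A A' : Matrix (Fin N) (Fin N) ℂ},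
      (∀ i j : Fin N, (j : ℕ) < (i : ℕ) → A' i j = 0) →
      (Ecols N k)ᴴ * (A * A') * Ecols N k =
        ((Ecols N k)ᴴ * A * Ecols N k) * ((Ecols N k)ᴴ * A' * Ecols N k) := by
    intro A A' hA'
    exact TodaAux.split_mul hk (fun j hj => Or.inr fun b hb => hA' j b (lt_of_lt_of_le hb hj))
  -- L = Eᴴ Rᴴ E
  have hBC : ((Ecols N k)ᴴ * (R⁻¹)ᴴ * Ecols N k) * ((Ecols N k)ᴴ * Rᴴ * Ecols N k) = 1 := by
    rw [← splitL hRinvH_low]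
    have h1 : (R⁻¹)ᴴ * Rᴴ = 1 := by
      rw [← Matrix.conjTranspose_mul, hRRinv, Matrix.conjTranspose_one]
    rw [h1, Matrix.mul_one, TodaAux.EHE hk]
  have hBdet : IsUnit ((Ecols N k)ᴴ * (R⁻¹)ᴴ * Ecols N k).det :=
    Matrix.isUnit_det_of_right_inverse hBC
  have hLC : L = (Ecols N k)ᴴ * Rᴴ * Ecols N k := by
    rw [hL]
    exact Matrix.inv_eq_right_inv hBC
  have hLinv : L⁻¹ = (Ecols N k)ᴴ * (R⁻¹)ᴴ * Ecols N k := by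
    rw [hL, Matrix.nonsing_inv_nonsing_inv _ hBdet]
  -- hermitian exponential
  have hMH : Mᴴ = M := by
    rw [hMdef, ← Matrix.exp_conjTranspose]
    congr 1
    rw [Matrix.conjTranspose_smul, hX0.eq]
    norm_num [Complex.star_def, Complex.conj_ofReal]
  -- R = Qᴴ M, Q = M R⁻¹
  have hReq : R = Qᴴ * M := by
    rw [hQR, ← Matrix.mul_assoc, hQHQ, Matrix.one_mul]
  have hQeq : M * R⁻¹ = Q := by
    rw [hQR, Matrix.mul_assoc, hRRinv, Matrix.mul_one]
  refine ⟨?_, ?_, ?_⟩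
  · -- L lower triangular with positive diagonal
    intro a b
    constructor
    · intro hab
      rw [hLC, TodaAux.entry hk]
      simp only [Matrix.conjTranspose_apply]
      rw [hRup _ _ (by simpa using hab)]
      simp
    · rintro rfl
      rw [hLC, TodaAux.entry hk]
      simp only [Matrix.conjTranspose_apply]
      have h := (hRtri (a.castLE hk) (a.castLE hk)).2 rfl
      constructor
      · simpa using h.1
      · simp [h.2]
  · -- L Lᴴ = Eᴴ exp(2t X0) E
    have hLHC : ((Ecols N k)ᴴ * Rᴴ * Ecols N k)ᴴ = (Ecols N k)ᴴ * R * Ecols N k := by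
      simp [Matrix.conjTranspose_mul, Matrix.mul_assoc]
    have hRHR : Rᴴ * R = M * M := by
      rw [hReq, Matrix.conjTranspose_mul, Matrix.conjTranspose_conjTranspose]
      calc Mᴴ * Q * (Qᴴ * M) = Mᴴ * (Q * Qᴴ) * M := by
            simp only [Matrix.mul_assoc]
        _ = M * M := by rw [hQQH, Matrix.mul_one, hMH]
    rw [hLC, hLHC, ← splitL hRH_low, hRHR]
    have h2t : (((2 * t : ℝ)) : ℂ) • X0 = (t : ℂ) • X0 + (t : ℂ) • X0 := by
      rw [← add_smul]
      congr 1
      push_cast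
      ring
    rw [h2t, Matrix.exp_add_of_commute _ _ (Commute.refl _), ← hMdef]
  · -- spectral weight
    have hXP : X0 * P = (lam : ℂ) • P := by
      ext i j
      have hv : P.mulVec (fun x => P x j) = fun x => P x j := by
        funext i'
        have h1 : (P * P) i' j = P i' j := by rw [hPidem]
        simpa [Matrix.mulVec, dotProduct, Matrix.mul_apply] using h1
      have h := (hPrange (fun x => P x j)).mpr hv
      have h2 := congrFun h i
      simpa [Matrix.mulVec, dotProduct, Matrix.mul_apply] using h2
    have hAP : ((t : ℂ) • X0) * P = ((t : ℂ) * (lam : ℂ)) • P := by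
      rw [smul_mul_assoc, hXP, smul_smul]
    have hMP : M * P = Complex.exp ((t : ℂ) * (lam : ℂ)) • P :=
      TodaAux.exp_mul_proj _ _ _ hAP
    have hPM : P * M = Complex.exp ((t : ℂ) * (lam : ℂ)) • P := by
      have h1 := congrArg Matrix.conjTranspose hMP
      rw [Matrix.conjTranspose_mul, hMH, hP.eq, Matrix.conjTranspose_smul, hP.eq] at h1
      rwa [show star (Complex.exp ((t : ℂ) * (lam : ℂ)))
          = Complex.exp ((t : ℂ) * (lam : ℂ)) by
        rw [Complex.star_def, ← Complex.exp_conj]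
        congr 1
        rw [_root_.map_mul, Complex.conj_ofReal, Complex.conj_ofReal]] at h1
    have hMPM : M * (P * M) = (Complex.exp ((t : ℂ) * (lam : ℂ))
        * Complex.exp ((t : ℂ) * (lam : ℂ))) • P := by
      rw [hPM, mul_smul_comm, hMP, smul_smul]
    have hQH : Qᴴ = (R⁻¹)ᴴ * M := by
      rw [← hQeq, Matrix.conjTranspose_mul, hMH]
    have hscal : (Real.exp (2 * lam * t) : ℂ)
        = Complex.exp ((t : ℂ) * (lam : ℂ)) * Complex.exp ((t : ℂ) * (lam : ℂ)) := by
      rw [Complex.ofReal_exp, ← Complex.exp_add]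
      congr 1
      push_cast
      ring
    have hBH : ((Ecols N k)ᴴ * (R⁻¹)ᴴ * Ecols N k)ᴴ = (Ecols N k)ᴴ * R⁻¹ * Ecols N k := by
      simp [Matrix.conjTranspose_mul, Matrix.mul_assoc]
    have hmat : (Ecols N k)ᴴ * ((R⁻¹)ᴴ * (P * R⁻¹)) * Ecols N k
        = ((Ecols N k)ᴴ * (R⁻¹)ᴴ * Ecols N k) * ((Ecols N k)ᴴ * P * Ecols N k)
          * ((Ecols N k)ᴴ * R⁻¹ * Ecols N k) := by
      rw [splitL hRinvH_low, splitR hRinvUp]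
      exact (Matrix.mul_assoc _ _ _).symm
    have hassoc : (Ecols N k)ᴴ * Qᴴ * P * Q * Ecols N k
        = (Ecols N k)ᴴ * ((R⁻¹)ᴴ * (M * (P * M) * R⁻¹)) * Ecols N k := by
      rw [hQH, ← hQeq]
      simp only [Matrix.mul_assoc]
    rw [hassoc, hMPM, smul_mul_assoc, mul_smul_comm, Matrix.mul_smul, Matrix.smul_mul,
      hmat, hscal, hLinv, hBH]
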